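/- Let V and W be finite-dimensional locally analytic representations of the Borel subgroup B of a split connected reductive p-adic group, with B = N·T. Then (1) every L-linear map V → W that is equivariant for the actions of the Lie algebra b and the torus T is automatically B-equivariant, i.e. Hom_B(V,W) = Hom_{(b,T)}(V,W); and (2) every (b,T)-stable linear subspace V₀ ⊆ V is B-stable. -/

import Mathlib

attribute [local instance 100] LieRing.ofAssociativeRing

/-- Corollary 2.6: Let `V`, `W` be finite-dimensional locally analytic
representations of the Borel subgroup `B = N·T` of a split connected reductive `p`-adic group.
Then (1) `Hom_B(V,W) = Hom_{(𝔟,T)}(V,W)`: every `L`-linear map `V → W` equivariant for the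
derived `𝔟`-action and for `T` is `B`-equivariant; and (2) every `(𝔟,T)`-stable subspace
`V₀ ⊆ V` is `B`-stable.

We encode the key structure: `T`, `N` are subgroups of `B` with `B = N·T` (`hB`), the action of
`N` is exponentiated from the nilpotent action of `𝔫 ⊆ 𝔟` (`hexpV`, `hexpW`, with `Exp`
surjecting onto `N`), and `π_V`, `π_W` are the derived actions of the locally analytic
representations `ρ_V`, `ρ_W`. -/
theorem statement4 {L : Type*} [Field L] [CharZero L]
    {𝔟 : Type*} [LieRing 𝔟] [LieAlgebra L 𝔟]
    (𝔫 : LieSubalgebra L 𝔟)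
    {B : Type*} [Group B] (T N : Subgroup B)
    (hB : ∀ b : B, ∃ n ∈ N, ∃ t ∈ T, b = n * t)
    (Exp : 𝔫 → B) (hExpN : ∀ Y : 𝔫, Exp Y ∈ N)
    (hExpSurj : ∀ g ∈ N, ∃ Y : 𝔫, Exp Y = g)
    {V W : Type*} [AddCommGroup V] [Module L V] [FiniteDimensional L V]
    [AddCommGroup W] [Module L W] [FiniteDimensional L W]
    (ρV : B →* (V ≃ₗ[L] V)) (πV : 𝔟 →ₗ⁅L⁆ Module.End L V)
    (ρW : B →* (W ≃ₗ[L] W)) (πW : 𝔟 →ₗ⁅L⁆ Module.End L W)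
    (hexpV : ∀ (Y : 𝔫) (v : V), ∃ k : ℕ, (πV (Y : 𝔟)) ^ k = 0 ∧
      ρV (Exp Y) v = ∑ n ∈ Finset.range k, (n.factorial : L)⁻¹ • ((πV (Y : 𝔟) ^ n) v))
    (hexpW : ∀ (Y : 𝔫) (w : W), ∃ k : ℕ, (πW (Y : 𝔟)) ^ k = 0 ∧
      ρW (Exp Y) w = ∑ n ∈ Finset.range k, (n.factorial : L)⁻¹ • ((πW (Y : 𝔟) ^ n) w)) :
    (∀ f : V →ₗ[L] W,
      (∀ (X : 𝔟) (v : V), f (πV X v) = πW X (f v)) →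
      (∀ t ∈ T, ∀ v : V, f (ρV t v) = ρW t (f v)) →
      ∀ (b : B) (v : V), f (ρV b v) = ρW b (f v)) ∧
    (∀ V₀ : Submodule L V,
      (∀ (X : 𝔟), ∀ v ∈ V₀, πV X v ∈ V₀) →
      (∀ t ∈ T, ∀ v ∈ V₀, ρV t v ∈ V₀) →
      ∀ (b : B), ∀ v ∈ V₀, ρV b v ∈ V₀) := by

  constructor
  · intro f hLie hT b v
    obtain ⟨g, hg, t, ht, rfl⟩ := hB b
    have hpow : ∀ (X : 𝔟) (n : ℕ) (v : V), f ((πV X ^ n) v) = (πW X ^ n) (f v) := by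
      intro X n
      induction n with
      | zero => simp
      | succ n ih =>
        intro v
        rw [pow_succ', pow_succ']
        simp only [Module.End.mul_apply]
        rw [hLie, ih]
    have hN : ∀ g ∈ N, ∀ v : V, f (ρV g v) = ρW g (f v) := by
      intro g hg v
      obtain ⟨Y, rfl⟩ := hExpSurj g hg
      obtain ⟨kV, hkV, hV⟩ := hexpV Y v
      obtain ⟨kW, hkW, hW⟩ := hexpW Y (f v)
      rw [hV, hW, map_sum]
      simp only [map_smul, hpow]
      have hzV : ∀ n, kV ≤ n → ((πW (Y : 𝔟)) ^ n) (f v) = 0 := by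
        intro n hn
        rw [← hpow]
        rw [← Nat.sub_add_cancel hn, pow_add, Module.End.mul_apply]
        simp [hkV]
      have hzW : ∀ n, kW ≤ n → ((πW (Y : 𝔟)) ^ n) (f v) = 0 := by
        intro n hn
        rw [← Nat.sub_add_cancel hn, pow_add, Module.End.mul_apply]
        simp [hkW]
      have e1 : ∑ n ∈ Finset.range kV, (n.factorial : L)⁻¹ • ((πW (Y : 𝔟)) ^ n) (f v)
          = ∑ n ∈ Finset.range (max kV kW), (n.factorial : L)⁻¹ • ((πW (Y : 𝔟)) ^ n) (f v) := by
        apply Finset.sum_subset (Finset.range_subset_range.2 (le_max_left _ _))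
        intro n _ hn
        rw [hzV n (by simpa using hn), smul_zero]
      have e2 : ∑ n ∈ Finset.range kW, (n.factorial : L)⁻¹ • ((πW (Y : 𝔟)) ^ n) (f v)
          = ∑ n ∈ Finset.range (max kV kW), (n.factorial : L)⁻¹ • ((πW (Y : 𝔟)) ^ n) (f v) := by
        apply Finset.sum_subset (Finset.range_subset_range.2 (le_max_right _ _))
        intro n _ hn
        rw [hzW n (by simpa using hn), smul_zero]
      rw [e1, e2]
    rw [map_mul, map_mul]
    show f ((ρV g) ((ρV t) _)) = (ρW g) ((ρW t) (f _))
    rw [hN g hg, hT t ht]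
  · intro V₀ hLie hT b v hv
    obtain ⟨g, hg, t, ht, rfl⟩ := hB b
    have hpow : ∀ (X : 𝔟) (n : ℕ), ∀ v ∈ V₀, ((πV X) ^ n) v ∈ V₀ := by
      intro X n
      induction n with
      | zero => simp
      | succ n ih =>
        intro v hv
        rw [pow_succ, Module.End.mul_apply]
        exact ih _ (hLie X v hv)
    have hN : ∀ g ∈ N, ∀ v ∈ V₀, ρV g v ∈ V₀ := by
      intro g hg v hv
      obtain ⟨Y, rfl⟩ := hExpSurj g hg
      obtain ⟨kV, hkV, hV⟩ := hexpV Y v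
      rw [hV]
      exact Submodule.sum_mem _ fun n _ => Submodule.smul_mem _ _ (hpow _ _ _ hv)
    rw [map_mul]
    show (ρV g) ((ρV t) v) ∈ V₀
    exact hN g hg _ (hT t ht v hv)
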